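/- Let μ be a stable matching of (P, C) with each C_f substitutable and satisfying LAD. Define P* by: each worker w reports only μ(w) as acceptable. Then μ is the unique stable matching of (P*, C), and P* is a Nash equilibrium of the game (ψ^C_F, P) with ψ^C_F(P*) = μ. -/

import Mathlib

/-! Common set-up for a many-to-one matching market.  `W` is the (finite) set of
workers and `F` the set of firms.  Each worker `w` has a strict preference over
`F ∪ {∅}`, modelled as a linear order `P w : LinearOrder (Option F)` (where
`none` stands for being unmatched and `L.lt a b` means `b` is strictly
preferred to `a`).  Each firm `f` has a choice function
`C f : Finset W → Finset W`. -/

/-- A many-to-one matching. -/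
structure Matching (W F : Type*) where
  /-- the firm (if any) assigned to each worker -/
  workerOf : W → Option F
  /-- the set of workers assigned to each firm -/
  firmOf : F → Finset W
  /-- `w` works for `f` iff `f` is `w`'s firm -/
  consistent : ∀ w f, w ∈ firmOf f ↔ workerOf w = some f

variable {W F : Type*} [DecidableEq W]

/-- A choice function: `Cf S ⊆ S`, and substitutability. -/
def SubChoice (Cf : Finset W → Finset W) : Prop :=
  (∀ S, Cf S ⊆ S) ∧ ∀ S' S : Finset W, S' ⊆ S → Cf S ∩ S' ⊆ Cf S'

/-- Consistency of a choice function. -/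
def ConsistentChoice (Cf : Finset W → Finset W) : Prop :=
  ∀ S' S : Finset W, Cf S ⊆ S' → S' ⊆ S → Cf S' = Cf S

/-- The law of aggregate demand. -/
def LAD (Cf : Finset W → Finset W) : Prop :=
  ∀ S' S : Finset W, S' ⊆ S → (Cf S').card ≤ (Cf S).card

/-- Individual rationality: no worker prefers being unmatched to her assignment,
and no firm wants to fire any of its workers. -/
def IndRational (P : W → LinearOrder (Option F)) (C : F → Finset W → Finset W)
    (μ : Matching W F) : Prop :=
  (∀ w : W, ¬ (P w).lt (μ.workerOf w) none) ∧
    ∀ f : F, C f (μ.firmOf f) = μ.firmOf f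

/-- Stability: individual rationality plus absence of blocking firm-worker pairs. -/
def Stable (P : W → LinearOrder (Option F)) (C : F → Finset W → Finset W)
    (μ : Matching W F) : Prop :=
  IndRational P C μ ∧
    ¬ ∃ (f : F) (w : W), w ∉ μ.firmOf f ∧ w ∈ C f (insert w (μ.firmOf f)) ∧
      (P w).lt (μ.workerOf w) (some f)

/-- `ψF` is the firm-optimal stable rule for the fixed profile of firm choice
functions `C`: for each reported worker profile it yields a stable matching
which every firm weakly prefers, in Blair's order, to any other stable
matching. -/
def FirmOptimalStableRule (C : F → Finset W → Finset W)
    (ψF : (W → LinearOrder (Option F)) → Matching W F) : Prop :=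
  ∀ P' : W → LinearOrder (Option F),
    Stable P' C (ψF P') ∧
      ∀ ν : Matching W F, Stable P' C ν →
        ∀ f : F, (ψF P').firmOf f = C f ((ψF P').firmOf f ∪ ν.firmOf f)

/-- Let `μ` be a stable matching of `(P, C)` with each `C_f`
substitutable, consistent and satisfying LAD, and let `P*` be the profile in
which each worker reports only `μ(w)` as acceptable.  Then `μ` is the unique
stable matching of `(P*, C)`, and `P*` is a Nash equilibrium of the game
`(ψ^C_F, P)` with `ψ^C_F(P*) = μ`. -/
theorem truncation_nashEq_of_stable [DecidableEq F]
    (P : W → LinearOrder (Option F)) (C : F → Finset W → Finset W)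
    (hC : ∀ f, SubChoice (C f) ∧ ConsistentChoice (C f) ∧ LAD (C f))
    (ψF : (W → LinearOrder (Option F)) → Matching W F)
    (hψF : FirmOptimalStableRule C ψF)
    (μ : Matching W F) (hμ : Stable P C μ)
    (Pstar : W → LinearOrder (Option F))
    -- any firm other than `μ(w)` is unacceptable for `w` under `P*_w`:
    (hP1 : ∀ (w : W) (f : F), some f ≠ μ.workerOf w → (Pstar w).lt (some f) none)
    -- `μ(w)` is acceptable for `w` under `P*_w`:
    (hP2 : ∀ (w : W) (f : F), μ.workerOf w = some f → (Pstar w).lt none (some f)) :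
    ({ν : Matching W F | Stable Pstar C ν} = {μ}) ∧
      (∀ (w : W) (Pw : LinearOrder (Option F)),
        ¬ (P w).lt ((ψF Pstar).workerOf w)
          ((ψF (Function.update Pstar w Pw)).workerOf w)) ∧
      ψF Pstar = μ := by
  classical
  -- substitutability restated
  have hsub : ∀ (f : F) (S' S : Finset W), S' ⊆ S → C f S ∩ S' ⊆ C f S' :=
    fun f => (hC f).1.2
  have hsubset : ∀ (f : F) (S : Finset W), C f S ⊆ S := fun f => (hC f).1.1
  have hcons : ∀ f, ConsistentChoice (C f) := fun f => (hC f).2.1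
  -- No worker `w` strictly `Pstar`-prefers any firm to `μ.workerOf w`.
  have noPref : ∀ (w : W) (f : F), ¬ (Pstar w).lt (μ.workerOf w) (some f) := by
    intro w f h
    letI := Pstar w
    have hne : some f ≠ μ.workerOf w := by
      intro h'; rw [← h'] at h; exact lt_irrefl _ h
    have h1 : (Pstar w).lt (some f) none := hP1 w f hne
    cases hμw : μ.workerOf w with
    | none => rw [hμw] at h; exact lt_irrefl _ (lt_trans h h1)
    | some g =>
        rw [hμw] at h
        exact lt_asymm (hP2 w g hμw) (lt_trans h h1)
  -- μ is stable under Pstar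
  have hμstar : Stable Pstar C μ := by
    refine ⟨⟨fun w => ?_, hμ.1.2⟩, ?_⟩
    · letI := Pstar w
      cases hμw : μ.workerOf w with
      | none => exact lt_irrefl _
      | some g => exact lt_asymm (hP2 w g hμw)
    · rintro ⟨f, w, _, _, hlt⟩
      exact noPref w f hlt
  -- any stable matching of (Pstar, C) equals μ
  have huniq : ∀ ν : Matching W F, Stable Pstar C ν → ν = μ := by
    intro ν hν
    -- each worker matched under ν is matched to her μ-firm
    have hmatch : ∀ (w : W) (f : F), ν.workerOf w = some f → μ.workerOf w = some f := by
      intro w f hw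
      by_contra hne
      have h1 : (Pstar w).lt (some f) none := hP1 w f (Ne.symm hne)
      have := hν.1.1 w
      rw [hw] at this
      exact this h1
    have hνsub : ∀ f : F, ν.firmOf f ⊆ μ.firmOf f := by
      intro f w hw
      exact (μ.consistent w f).2 (hmatch w f ((ν.consistent w f).1 hw))
    -- workers agree
    have hwork : ∀ w : W, ν.workerOf w = μ.workerOf w := by
      intro w
      cases hνw : ν.workerOf w with
      | some f => exact (hmatch w f hνw).symm
      | none =>
          cases hμw : μ.workerOf w with
          | none => rfl
          | some f =>
              exfalso
              apply hν.2
              refine ⟨f, w, ?_, ?_, ?_⟩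
              · intro hmem
                rw [(ν.consistent w f).1 hmem] at hνw; exact Option.some_ne_none _ hνw
              · have hwμ : w ∈ μ.firmOf f := (μ.consistent w f).2 hμw
                have hins : insert w (ν.firmOf f) ⊆ μ.firmOf f :=
                  Finset.insert_subset hwμ (hνsub f)
                have : w ∈ C f (μ.firmOf f) ∩ insert w (ν.firmOf f) := by
                  rw [hμ.1.2 f]
                  exact Finset.mem_inter.2 ⟨hwμ, Finset.mem_insert_self _ _⟩
                exact hsub f _ _ hins this
              · rw [hνw]; exact hP2 w f hμw
    -- firms agree
    have hfirm : ∀ f : F, ν.firmOf f = μ.firmOf f := by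
      intro f
      ext w
      rw [ν.consistent, μ.consistent, hwork w]
    cases ν with
    | mk νw νf νc =>
        cases μ with
        | mk μw μf μc =>
            simp only [Matching.mk.injEq]
            exact ⟨funext hwork, funext hfirm⟩
  have hψμ : ψF Pstar = μ := huniq _ (hψF Pstar).1
  refine ⟨?_, ?_, hψμ⟩
  · ext ν
    simp only [Set.mem_setOf_eq, Set.mem_singleton_iff]
    exact ⟨huniq ν, fun h => h ▸ hμstar⟩
  · intro w Pw hlt
    rw [hψμ] at hlt
    set P' := Function.update Pstar w Pw with hP'
    set ν := ψF P' with hν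
    have hνstab : Stable P' C ν := (hψF P').1
    -- the outcome for w under the deviation
    cases hνw : ν.workerOf w with
    | none => rw [hνw] at hlt; exact hμ.1.1 w hlt
    | some f =>
        rw [hνw] at hlt
        -- w is not in μ.firmOf f
        have hne : μ.workerOf w ≠ some f := by
          intro h; rw [h] at hlt
          letI := P w
          exact lt_irrefl _ hlt
        have hwnμ : w ∉ μ.firmOf f := fun h => hne ((μ.consistent w f).1 h)
        have hwν : w ∈ ν.firmOf f := (ν.consistent w f).2 hνw
        -- everyone else matched to f under ν is in μ.firmOf f
        have hνfA : ν.firmOf f ⊆ insert w (μ.firmOf f) := by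
          intro x hx
          by_cases hxw : x = w
          · subst hxw; exact Finset.mem_insert_self _ _
          · refine Finset.mem_insert_of_mem ?_
            have hxf : ν.workerOf x = some f := (ν.consistent x f).1 hx
            have hIR := hνstab.1.1 x
            rw [hxf] at hIR
            rw [hP'] at hIR
            rw [Function.update_of_ne hxw] at hIR
            by_contra hxμ
            exact hIR (hP1 x f (fun h => hxμ ((μ.consistent x f).2 h.symm)))
        by_cases hwCA : w ∈ C f (insert w (μ.firmOf f))
        · exact hμ.2 ⟨f, w, hwnμ, hwCA, hlt⟩
        · -- then C f A = μ.firmOf f by consistency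
          have hCA : C f (insert w (μ.firmOf f)) = μ.firmOf f := by
            have h1 : C f (insert w (μ.firmOf f)) ⊆ μ.firmOf f := by
              intro x hx
              rcases Finset.mem_insert.1 (hsubset f _ hx) with h | h
              · exact absurd (h ▸ hx) hwCA
              · exact h
            have := hcons f (μ.firmOf f) (insert w (μ.firmOf f)) h1
              (Finset.subset_insert _ _)
            rw [← this, hμ.1.2 f]
          -- find w'' in μ.firmOf f but not ν.firmOf f
          have hex : ∃ w'' ∈ μ.firmOf f, w'' ∉ ν.firmOf f := by
            by_contra hno
            push_neg at hno
            have hA : ν.firmOf f = insert w (μ.firmOf f) :=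
              Finset.Subset.antisymm hνfA (Finset.insert_subset hwν hno)
            have := hνstab.1.2 f
            rw [hA, hCA] at this
            exact hwnμ (this ▸ Finset.mem_insert_self w (μ.firmOf f))
          obtain ⟨w'', hw''μ, hw''ν⟩ := hex
          have hw''w : w'' ≠ w := fun h => hwnμ (h ▸ hw''μ)
          -- w'' is unmatched under ν
          have hw''none : ν.workerOf w'' = none := by
            cases hw : ν.workerOf w'' with
            | none => rfl
            | some g =>
                exfalso
                have hIR := hνstab.1.1 w''
                rw [hw, hP', Function.update_of_ne hw''w] at hIR
                by_cases hg : some g = μ.workerOf w''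
                · have : μ.workerOf w'' = some f := (μ.consistent w'' f).1 hw''μ
                  rw [this] at hg
                  have : w'' ∈ ν.firmOf f := (ν.consistent w'' f).2 (by rw [hw, hg])
                  exact hw''ν this
                · exact hIR (hP1 w'' g hg)
          -- (f, w'') blocks ν under P'
          apply hνstab.2
          refine ⟨f, w'', hw''ν, ?_, ?_⟩
          · have hB : insert w'' (ν.firmOf f) ⊆ insert w (μ.firmOf f) :=
              Finset.insert_subset (Finset.mem_insert_of_mem hw''μ) hνfA
            apply hsub f _ _ hB
            rw [hCA]
            exact Finset.mem_inter.2 ⟨hw''μ, Finset.mem_insert_self _ _⟩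
          · rw [hw''none, hP', Function.update_of_ne hw''w]
            exact hP2 w'' f ((μ.consistent w'' f).1 hw''μ)
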